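/- Let K be a nontrivially normed field which is locally compact and whose norm is ultrametric (a non-archimedean local field). Let N be an ultrametric norm on Kⁿ. Then there exists a K-basis (e_i) of Kⁿ and positive real numbers α_i > 0 (i ∈ Fin n) such that, writing every x ∈ Kⁿ as x = ∑ i, c i • e i, one has N(x) = max_i (α i · ‖c i‖); that is, every ultrametric norm on Kⁿ is diagonal in some basis. -/

import Mathlib

set_option maxHeartbeats 1000000

/-- `Fin.snoc` with a zero last coordinate, as a linear map. -/
def snocZeroLM (K : Type*) [NontriviallyNormedField K] (n : ℕ) :
    (Fin n → K) →ₗ[K] (Fin (n + 1) → K) where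
  toFun c := Fin.snoc c 0
  map_add' u v := by
    funext i
    refine Fin.lastCases ?_ (fun j => ?_) i <;> simp
  map_smul' a u := by
    funext i
    refine Fin.lastCases ?_ (fun j => ?_) i <;> simp

lemma snocZeroLM_apply {K : Type*} [NontriviallyNormedField K] {n : ℕ} (c : Fin n → K) :
    snocZeroLM K n c = Fin.snoc c 0 := rfl

lemma ciSup_fin_succ {n : ℕ} (h : Fin (n + 1) → ℝ) (hnn : ∀ i, 0 ≤ h i) :
    ⨆ i, h i = max (⨆ i : Fin n, h i.castSucc) (h (Fin.last n)) := by
  have bdd : BddAbove (Set.range h) := (Set.finite_range h).bddAbove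
  have bdd' : BddAbove (Set.range fun i : Fin n => h i.castSucc) :=
    (Set.finite_range _).bddAbove
  apply le_antisymm
  · refine Real.iSup_le (fun i => ?_) ((hnn _).trans (le_max_right _ _))
    refine Fin.lastCases ?_ (fun j => ?_) i
    · exact le_max_right _ _
    · exact (le_ciSup bdd' j).trans (le_max_left _ _)
  · exact max_le (Real.iSup_le (fun j => le_ciSup bdd j.castSucc) (Real.iSup_nonneg hnn))
      (le_ciSup bdd (Fin.last n))

lemma diag_norm (K : Type*) [NontriviallyNormedField K] [LocallyCompactSpace K] :
    ∀ (n : ℕ) (N : (Fin n → K) → ℝ),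
      (∀ x, N x = 0 ↔ x = 0) →
      (∀ (c : K) (x), N (c • x) = ‖c‖ * N x) →
      (∀ x y, N (x + y) ≤ max (N x) (N y)) →
      ∃ (e : Module.Basis (Fin n) K (Fin n → K)) (α : Fin n → ℝ),
        (∀ i, 0 < α i) ∧
        (∀ c : Fin n → K, N (∑ i, c i • e i) = ⨆ i, α i * ‖c i‖) := by
  intro n
  induction n with
  | zero =>
    intro N hN0 hNs hNa
    refine ⟨Pi.basisFun K (Fin 0), fun _ => 1, fun i => i.elim0, fun c => ?_⟩
    rw [show (∑ i : Fin 0, c i • (Pi.basisFun K (Fin 0)) i) = 0 by simp,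
      (hN0 0).mpr rfl]
    exact (Real.iSup_of_isEmpty _).symm
  | succ n IH =>
    intro N hN0 hNs hNa
    -- basic facts about N
    have hNneg : ∀ x, N (-x) = N x := by
      intro x
      have h1 : N ((-1 : K) • x) = ‖(-1 : K)‖ * N x := hNs _ _
      simpa using h1
    have hNnn : ∀ x, 0 ≤ N x := by
      intro x
      have h0 : N 0 = 0 := (hN0 0).mpr rfl
      have h := hNa x (-x)
      rw [add_neg_cancel, h0, hNneg, max_self] at h
      linarith
    have hNsub : ∀ x y, N x - N y ≤ N (x - y) := by
      intro x y
      have h := hNa (x - y) y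
      rw [sub_add_cancel] at h
      rcases le_max_iff.mp h with h' | h'
      · have := hNnn y; linarith
      · have := hNnn (x - y); linarith
    have hNdiff : ∀ x y, |N x - N y| ≤ N (x - y) := by
      intro x y
      rw [abs_sub_le_iff]
      refine ⟨hNsub x y, ?_⟩
      have := hNsub y x
      rwa [show y - x = -(x - y) by ring, hNneg] at this
    set ι := snocZeroLM K n with hιdef
    have hι0 : ∀ u, ι u = 0 → u = 0 := by
      intro u hu'
      funext j
      have h := congrFun hu' j.castSucc
      simpa [hιdef, snocZeroLM_apply, Fin.snoc_castSucc] using h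
    have hxlast : ∀ u, ι u (Fin.last n) = 0 := by
      intro u; simp [hιdef, snocZeroLM_apply, Fin.snoc_last]
    -- the pulled-back norm on Kⁿ
    obtain ⟨e', α', hα'pos, hE⟩ :=
      IH (fun u => N (ι u))
        (fun u => ⟨fun h => hι0 u ((hN0 _).mp h),
          fun h => by rw [h]; show N (ι 0) = 0; rw [map_zero]; exact (hN0 0).mpr rfl⟩)
        (fun c u => by show N (ι (c • u)) = ‖c‖ * N (ι u); rw [map_smul]; exact hNs c (ι u))
        (fun u v => by show N (ι (u + v)) ≤ _; rw [map_add]; exact hNa _ _)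
    set s : (Fin n → K) → (Fin n → K) := fun c => ∑ i, c i • e' i with hsdef
    have hF : ∀ c, N (ι (s c)) = ⨆ i, α' i * ‖c i‖ := fun c => hE c
    have hs_sub : ∀ c c', s c - s c' = s (c - c') := by
      intro c c'
      simp only [hsdef]
      rw [← Finset.sum_sub_distrib]
      refine Finset.sum_congr rfl fun i _ => ?_
      rw [Pi.sub_apply, sub_smul]
    have hs_smul : ∀ (d : K) (c), d • s c = s (d • c) := by
      intro d c
      simp only [hsdef, Finset.smul_sum, smul_smul, Pi.smul_apply, smul_eq_mul]
    set x : Fin (n + 1) → K := Pi.single (Fin.last n) 1 with hxdef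
    set g : (Fin n → K) → ℝ := fun c => N (x - ι (s c)) with hgdef
    have hg0 : g 0 = N x := by
      have hs0 : s 0 = 0 := by simp [hsdef]
      simp [hgdef, hs0]
    have hgdiff : ∀ c c', |g c - g c'| ≤ ⨆ i, α' i * ‖c i - c' i‖ := by
      intro c c'
      have h1 : (x - ι (s c)) - (x - ι (s c')) = -(ι (s (c - c'))) := by
        rw [← hs_sub, map_sub]; abel
      calc |g c - g c'| ≤ N ((x - ι (s c)) - (x - ι (s c'))) := hNdiff _ _
        _ = N (ι (s (c - c'))) := by rw [h1, hNneg]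
        _ = ⨆ i, α' i * ‖(c - c') i‖ := hF _
        _ = ⨆ i, α' i * ‖c i - c' i‖ := by simp
    set C : ℝ := ∑ i, α' i with hCdef
    have hCnn : 0 ≤ C := Finset.sum_nonneg fun i _ => (hα'pos i).le
    have hgcont : Continuous g := by
      refine LipschitzWith.continuous (K := ⟨C, hCnn⟩)
        (LipschitzWith.of_dist_le_mul fun c c' => ?_)
      show dist (g c) (g c') ≤ C * dist c c'
      rw [Real.dist_eq]
      refine (hgdiff c c').trans (Real.iSup_le (fun i => ?_) (by positivity))
      have h1 : ‖c i - c' i‖ = dist (c i) (c' i) := (dist_eq_norm _ _).symm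
      have h2 : dist (c i) (c' i) ≤ dist c c' := dist_le_pi_dist c c' i
      have h3 : α' i ≤ C :=
        Finset.single_le_sum (fun j _ => (hα'pos j).le) (Finset.mem_univ i)
      rw [h1]
      exact mul_le_mul h3 h2 dist_nonneg hCnn
    haveI hproper : ProperSpace K := ProperSpace.of_locallyCompactSpace K (E := K)
    set R : ℝ := N x * (∑ i, (α' i)⁻¹) + 1 with hRdef
    have hR0 : 0 ≤ R := by
      have h1 := hNnn x
      have h2 : 0 ≤ ∑ i, (α' i)⁻¹ := Finset.sum_nonneg fun i _ => inv_nonneg.mpr (hα'pos i).le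
      have h3 := mul_nonneg h1 h2
      rw [hRdef]; linarith
    set S : Set (Fin n → K) := Set.pi Set.univ (fun _ => Metric.closedBall (0 : K) R)
      with hSdef
    have hScomp : IsCompact S := isCompact_univ_pi fun _ => isCompact_closedBall 0 R
    have h0S : (0 : Fin n → K) ∈ S := by
      intro i _
      simpa using hR0
    obtain ⟨c0, hc0S, hc0min⟩ := hScomp.exists_isMinOn ⟨0, h0S⟩ hgcont.continuousOn
    have hmin : ∀ c, g c0 ≤ g c := by
      intro c
      by_cases hc : c ∈ S
      · exact hc0min hc
      · have hex : ∃ i, R < ‖c i‖ := by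
          by_contra h
          push_neg at h
          exact hc fun i _ => by
            simpa [Metric.mem_closedBall, dist_eq_norm] using h i
        obtain ⟨i, hi⟩ := hex
        have hFi : α' i * ‖c i‖ ≤ ⨆ j, α' j * ‖c j‖ :=
          le_ciSup (f := fun j => α' j * ‖c j‖) ((Set.finite_range _).bddAbove) i
        have hsum : (α' i)⁻¹ ≤ ∑ j, (α' j)⁻¹ :=
          Finset.single_le_sum (f := fun j => (α' j)⁻¹)
            (fun j _ => inv_nonneg.mpr (hα'pos j).le) (Finset.mem_univ i)
        have hNx := hNnn x
        have hkey : α' i * (α' i)⁻¹ = 1 := mul_inv_cancel₀ (hα'pos i).ne'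
        have h1 : N x < α' i * R := by
          have h2 : α' i * (α' i)⁻¹ ≤ α' i * ∑ j, (α' j)⁻¹ :=
            mul_le_mul_of_nonneg_left hsum (hα'pos i).le
          rw [hRdef]
          nlinarith [hα'pos i]
        have hgtNx : N x < N (ι (s c)) := by
          rw [hF c]
          exact (h1.trans_le
            (mul_le_mul_of_nonneg_left hi.le (hα'pos i).le)).trans_le hFi
        have h4 : N (ι (s c)) ≤ max (N (x - ι (s c))) (N x) := by
          have h := hNa (-(x - ι (s c))) x
          rw [hNneg] at h
          have heq : -(x - ι (s c)) + x = ι (s c) := by abel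
          rwa [heq] at h
        have h5 : N (ι (s c)) ≤ N (x - ι (s c)) := by
          rcases le_max_iff.mp h4 with h' | h'
          · exact h'
          · linarith
        calc g c0 ≤ g 0 := hc0min h0S
          _ = N x := hg0
          _ ≤ N (ι (s c)) := hgtNx.le
          _ ≤ g c := h5
    set w : Fin (n + 1) → K := x - ι (s c0) with hwdef
    have hwmin : ∀ c, N w ≤ N (x - ι (s c)) := fun c => hmin c
    have hwne : w ≠ 0 := by
      intro h
      have hx : x = ι (s c0) := by rwa [sub_eq_zero] at h
      have hc := congrFun hx (Fin.last n)
      rw [hxlast] at hc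
      simp [hxdef] at hc
    have hwpos : 0 < N w := by
      rcases (hNnn w).lt_or_eq with h | h
      · exact h
      · exact absurd ((hN0 w).mp h.symm) hwne
    have horth : ∀ (d : K) (c : Fin n → K),
        N (ι (s c) + d • w) = max (N (ι (s c))) (‖d‖ * N w) := by
      intro d c
      have hlow : ∀ c', N w ≤ N (w + ι (s c')) := by
        intro c'
        have heq : w + ι (s c') = x - ι (s (c0 - c')) := by
          rw [← hs_sub, map_sub, hwdef]; abel
        rw [heq]
        exact hwmin _
      have hdw : ‖d‖ * N w ≤ N (ι (s c) + d • w) := by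
        rcases eq_or_ne d 0 with rfl | hd
        · simpa using hNnn (ι (s c) + (0 : K) • w)
        · have h1 : ι (s c) + d • w = d • (ι (s (d⁻¹ • c)) + w) := by
            rw [← hs_smul d⁻¹ c, map_smul, smul_add, smul_inv_smul₀ hd]
          rw [h1, hNs]
          have h2 := hlow (d⁻¹ • c)
          rw [add_comm] at h2
          exact mul_le_mul_of_nonneg_left h2 (norm_nonneg d)
      have ha : N (ι (s c)) ≤ N (ι (s c) + d • w) := by
        have h := hNa (ι (s c) + d • w) (-(d • w))
        rw [hNneg, add_neg_cancel_right] at h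
        have h3 : N (d • w) ≤ N (ι (s c) + d • w) := by rw [hNs]; exact hdw
        rcases le_max_iff.mp h with h' | h'
        · exact h'
        · exact h'.trans h3
      apply le_antisymm
      · have h := hNa (ι (s c)) (d • w)
        rwa [hNs] at h
      · exact max_le ha hdw
    set f : Fin (n + 1) → (Fin (n + 1) → K) := Fin.snoc (fun i => ι (e' i)) w
      with hfdef
    set α : Fin (n + 1) → ℝ := Fin.snoc α' (N w) with hαdef
    have hαpos : ∀ i, 0 < α i := by
      intro i
      refine Fin.lastCases ?_ (fun j => ?_) i
      · simpa [hαdef, Fin.snoc_last] using hwpos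
      · simpa [hαdef, Fin.snoc_castSucc] using hα'pos j
    have hkey : ∀ c : Fin (n + 1) → K, N (∑ i, c i • f i) = ⨆ i, α i * ‖c i‖ := by
      intro c
      have hsum : ∑ i, c i • f i
          = ι (s (fun j => c j.castSucc)) + c (Fin.last n) • w := by
        rw [Fin.sum_univ_castSucc]
        congr 1
        · have h1 : ι (s (fun j => c j.castSucc))
              = ∑ j : Fin n, c j.castSucc • ι (e' j) := by
            rw [hsdef]
            simp only [map_sum, map_smul]
          rw [h1]
          refine Finset.sum_congr rfl fun j _ => ?_
          rw [hfdef, Fin.snoc_castSucc]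
        · rw [hfdef, Fin.snoc_last]
      rw [hsum, horth, hF,
        ciSup_fin_succ (fun i => α i * ‖c i‖)
          (fun i => mul_nonneg (hαpos i).le (norm_nonneg _))]
      simp only [hαdef, Fin.snoc_castSucc, Fin.snoc_last]
      rw [mul_comm (N w)]
    have hli : LinearIndependent K f := by
      rw [Fintype.linearIndependent_iff]
      intro gg hgg i
      have h0 : (⨆ i, α i * ‖gg i‖) = 0 := by
        rw [← hkey gg, hgg]
        exact (hN0 0).mpr rfl
      have h1 : α i * ‖gg i‖ ≤ 0 :=
        h0 ▸ le_ciSup (f := fun j => α j * ‖gg j‖) ((Set.finite_range _).bddAbove) i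
      have h2 : ‖gg i‖ = 0 := by nlinarith [hαpos i, norm_nonneg (gg i)]
      exact norm_eq_zero.mp h2
    have hcard : Fintype.card (Fin (n + 1)) = Module.finrank K (Fin (n + 1) → K) := by
      simp [Module.finrank_pi]
    refine ⟨basisOfLinearIndependentOfCardEqFinrank hli hcard, α, hαpos, fun c => ?_⟩
    have hb : ⇑(basisOfLinearIndependentOfCardEqFinrank hli hcard) = f :=
      coe_basisOfLinearIndependentOfCardEqFinrank hli hcard
    simp only [hb]
    exact hkey c

/-- Over a non-archimedean local field `K`, every ultrametric norm on `Kⁿ` is diagonal in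
some basis: `N(∑ cᵢ eᵢ) = max_i (αᵢ * ‖cᵢ‖)` for some `αᵢ > 0`. -/
theorem stmt6 (K : Type*) [NontriviallyNormedField K] [LocallyCompactSpace K]
    (hu : ∀ x y : K, ‖x + y‖ ≤ max ‖x‖ ‖y‖)
    (n : ℕ) (N : (Fin n → K) → ℝ)
    (hN0 : ∀ x, N x = 0 ↔ x = 0)
    (hNsmul : ∀ (c : K) (x), N (c • x) = ‖c‖ * N x)
    (hNadd : ∀ x y, N (x + y) ≤ max (N x) (N y)) :
    ∃ (e : Module.Basis (Fin n) K (Fin n → K)) (α : Fin n → ℝ),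
      (∀ i, 0 < α i) ∧
      (∀ c : Fin n → K, N (∑ i, c i • e i) = ⨆ i, α i * ‖c i‖) := by
  exact diag_norm K n N hN0 hNsmul hNadd
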